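/- Let G be a group and g₁, …, g_k ∈ G torsion elements of finite orders d₁ < d₂ < … < d_k, all greater than 1. Set p₀ = 1 ∈ ℂ[G] and let pⱼ = p_{gⱼ} be the associated idempotents for 1 ≤ j ≤ k. Let τ₀ : ℂ[G] → ℂ be the functional f ↦ f(1) (coefficient at the identity) and, for 1 ≤ i ≤ k, let τᵢ = τ_{C(gᵢ)} be the conjugacy-class functional of the conjugacy class of gᵢ. Then the (k+1)×(k+1) complex matrix A with entries A_{ij} = τᵢ(pⱼ) (indices 0 ≤ i, j ≤ k) has nonzero determinant. -/

import Mathlib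

/-- The idempotent associated to an element `g` of finite order `d`:
`p_g = (1/d) · ∑_{t=0}^{d-1} g^t ∈ ℂ[G]`. -/
noncomputable def pIdem {G : Type*} [Group G] (g : G) (d : ℕ) : MonoidAlgebra ℂ G :=
  (d : ℂ)⁻¹ • ∑ t ∈ Finset.range d, MonoidAlgebra.of ℂ G (g ^ t)

/-- The conjugacy-class functional `τ_C(f) = ∑_{g ∈ C} f(g)` on `ℂ[G]`. -/
noncomputable def tauC {G : Type*} [Group G] (C : Set G) (f : MonoidAlgebra ℂ G) : ℂ :=
  ∑ g ∈ f.coeff.support, C.indicator (fun x => f.coeff x) g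

open scoped Classical

open Finset in
lemma pIdem_apply {G : Type*} [Group G] (g : G) (d : ℕ) (hd : orderOf g = d) (x : G) :
    (pIdem g d).coeff x = if ∃ t < d, g ^ t = x then (d : ℂ)⁻¹ else 0 := by
  classical
  unfold pIdem
  rw [MonoidAlgebra.coeff_smul, Finsupp.smul_apply, MonoidAlgebra.coeff_sum, Finsupp.finset_sum_apply]
  simp only [MonoidAlgebra.of_apply, MonoidAlgebra.coeff_single, Finsupp.single_apply]
  split_ifs with h
  · obtain ⟨t₀, ht₀, rfl⟩ := h
    rw [Finset.sum_eq_single t₀]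
    · simp
    · intro t ht hne
      rw [if_neg]
      intro hgt
      exact hne (pow_injOn_Iio_orderOf (by simpa [hd] using (mem_range.mp ht))
        (by simpa [hd] using ht₀) hgt)
    · intro h; exact absurd (mem_range.mpr ht₀) h
  · rw [Finset.sum_eq_zero, smul_zero]
    intro t ht
    rw [if_neg]
    exact fun hgt => h ⟨t, mem_range.mp ht, hgt⟩

lemma pIdem_mem_support {G : Type*} [Group G] {g : G} {d : ℕ} (hd : orderOf g = d)
    {x : G} (hx : x ∈ (pIdem g d).coeff.support) : ∃ t < d, g ^ t = x := by
  classical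
  have := Finsupp.mem_support_iff.mp hx
  rw [pIdem_apply g d hd] at this
  by_contra h
  exact this (if_neg h)

lemma tauC_pIdem_eq_zero {G : Type*} [Group G] (g : G) (d : ℕ) (hd : orderOf g = d)
    (C : Set G) (h : ∀ t, g ^ t ∉ C) : tauC C (pIdem g d) = 0 := by
  classical
  unfold tauC
  apply Finset.sum_eq_zero
  intro x hx
  obtain ⟨t, _, rfl⟩ := pIdem_mem_support hd hx
  exact Set.indicator_of_notMem (h t) _

lemma tauC_pIdem_ne_zero {G : Type*} [Group G] (g : G) (d : ℕ) (hd : orderOf g = d)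
    (hd1 : 1 < d) (C : Set G) (hg : g ∈ C) : tauC C (pIdem g d) ≠ 0 := by
  classical
  unfold tauC
  have hval : ∀ x ∈ (pIdem g d).coeff.support, (pIdem g d).coeff x = (d : ℂ)⁻¹ := by
    intro x hx
    obtain ⟨t, ht, rfl⟩ := pIdem_mem_support hd hx
    rw [pIdem_apply g d hd, if_pos ⟨t, ht, rfl⟩]
  have hsum : ∑ x ∈ (pIdem g d).coeff.support, C.indicator (fun y => (pIdem g d).coeff y) x
      = ∑ x ∈ (pIdem g d).coeff.support.filter (· ∈ C), (d : ℂ)⁻¹ := by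
    rw [Finset.sum_filter]
    refine Finset.sum_congr rfl fun x hx => ?_
    rw [Set.indicator_apply]
    split_ifs with h
    · exact hval x hx
    · rfl
  rw [hsum, Finset.sum_const, nsmul_eq_mul]
  have hdne : (d : ℂ) ≠ 0 := Nat.cast_ne_zero.mpr (by omega)
  have hgsupp : g ∈ (pIdem g d).coeff.support := by
    rw [Finsupp.mem_support_iff, pIdem_apply g d hd,
      if_pos ⟨1, hd1, pow_one g⟩]
    exact inv_ne_zero hdne
  have hmem : g ∈ (pIdem g d).coeff.support.filter (· ∈ C) :=
    Finset.mem_filter.mpr ⟨hgsupp, hg⟩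
  have hcard : ((pIdem g d).coeff.support.filter (· ∈ C)).card ≠ 0 :=
    Finset.card_ne_zero_of_mem hmem
  exact mul_ne_zero (Nat.cast_ne_zero.mpr hcard) (inv_ne_zero hdne)

lemma tauC_one_eq_zero {G : Type*} [Group G] (C : Set G) (h : (1 : G) ∉ C) :
    tauC C (1 : MonoidAlgebra ℂ G) = 0 := by
  classical
  unfold tauC
  apply Finset.sum_eq_zero
  intro x hx
  have hx1 : x = (1 : G) := by
    rw [MonoidAlgebra.one_def, MonoidAlgebra.coeff_single] at hx
    have := Finsupp.support_single_subset hx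
    simpa using this
  subst hx1
  exact Set.indicator_of_notMem h _

/-- Let `g₁, …, g_k` have finite orders `d₁ < d₂ < … < d_k`, all `> 1`.
With `p₀ = 1`, `pⱼ = p_{gⱼ}`, `τ₀ f = f(1)` and `τᵢ = τ_{C(gᵢ)}`, the
`(k+1) × (k+1)` matrix `A_{ij} = τᵢ(pⱼ)` has nonzero determinant. -/
theorem det_trace_matrix_ne_zero {G : Type*} [Group G] (k : ℕ)
    (g : Fin k → G) (d : Fin k → ℕ)
    (hd : ∀ i, 1 < d i) (hmono : StrictMono d)
    (horder : ∀ i, orderOf (g i) = d i) :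
    (Matrix.of fun i j : Fin (k + 1) =>
        (Fin.cons (fun f : MonoidAlgebra ℂ G => f.coeff 1)
            (fun i => tauC {h : G | IsConj (g i) h}) :
          Fin (k + 1) → MonoidAlgebra ℂ G → ℂ) i
        ((Fin.cons (1 : MonoidAlgebra ℂ G) (fun j => pIdem (g j) (d j)) :
          Fin (k + 1) → MonoidAlgebra ℂ G) j)).det
      ≠ 0 := by
  classical
  set A : Matrix (Fin (k + 1)) (Fin (k + 1)) ℂ := Matrix.of fun i j : Fin (k + 1) =>
        (Fin.cons (fun f : MonoidAlgebra ℂ G => f.coeff 1)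
            (fun i => tauC {h : G | IsConj (g i) h}) :
          Fin (k + 1) → MonoidAlgebra ℂ G → ℂ) i
        ((Fin.cons (1 : MonoidAlgebra ℂ G) (fun j => pIdem (g j) (d j)) :
          Fin (k + 1) → MonoidAlgebra ℂ G) j) with hA
  have horder_ne_conj : ∀ i : Fin k, ∀ x : G, IsConj (g i) x → orderOf x = d i := by
    intro i x hc
    obtain ⟨c, hc⟩ := hc
    rw [← horder i]
    exact (SemiconjBy.orderOf_eq _ hc).symm
  have htri : A.BlockTriangular id := by
    intro i j hij
    simp only [id] at hij
    obtain rfl | ⟨i', rfl⟩ := Fin.eq_zero_or_eq_succ i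
    · exact absurd hij (by simp)
    · obtain rfl | ⟨j', rfl⟩ := Fin.eq_zero_or_eq_succ j
      · -- j = 0 : τ_{i'} (1) = 0
        simp only [hA, Matrix.of_apply, Fin.cons_succ, Fin.cons_zero]
        apply tauC_one_eq_zero
        intro hmem
        have h1 : IsConj (g i') 1 := hmem
        have he : g i' = 1 := isConj_one_left.mp h1
        have h2 := horder i'
        rw [he, orderOf_one] at h2
        have := hd i'
        omega
      · simp only [hA, Matrix.of_apply, Fin.cons_succ]
        apply tauC_pIdem_eq_zero _ _ (horder j')
        intro t hmem
        have hc : IsConj (g i') ((g j') ^ t) := hmem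
        have h1 : orderOf ((g j') ^ t) = d i' := horder_ne_conj i' _ hc
        have h2 : orderOf ((g j') ^ t) ∣ d j' := (horder j') ▸ orderOf_pow_dvd t
        rw [h1] at h2
        have hji : j' < i' := Fin.succ_lt_succ_iff.mp hij
        have := hmono hji
        have := Nat.le_of_dvd (by have := hd j'; omega) h2
        omega
  rw [Matrix.det_of_upperTriangular htri]
  rw [Finset.prod_ne_zero_iff]
  intro i _
  obtain rfl | ⟨i', rfl⟩ := Fin.eq_zero_or_eq_succ i
  · simp only [hA, Matrix.of_apply, Fin.cons_zero]
    rw [MonoidAlgebra.one_def]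
    simp
  · simp only [hA, Matrix.of_apply, Fin.cons_succ]
    exact tauC_pIdem_ne_zero _ _ (horder i') (hd i') _ (IsConj.refl _)
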